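/- arXiv:1809.05186 — 2 statements merged into one kernel-verified Lean document; each statement's English description precedes it below -/
import Mathlib

section
/- Every minimal point-separating set F ⊆ C(X, ℝ) (with the topology of pointwise convergence) is discrete as a subspace of C_p(X): every f ∈ F has a neighborhood in the pointwise topology meeting F only in f. -/
/-- A set of functions separates points. -/
def SepFun {X : Type*} (F : Set (X → ℝ)) : Prop :=
  ∀ x y : X, x ≠ y → ∃ f ∈ F, f x ≠ f y

def MinSepFun {X : Type*} (F : Set (X → ℝ)) : Prop :=
  SepFun F ∧ ∀ G ⊂ F, ¬ SepFun G

/-- Any minimal point-separating set of continuous functions is discrete as a subspace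
of `C_p(X)`, i.e. of `X → ℝ` with the product (pointwise convergence) topology: every
`f ∈ F` admits an open neighborhood meeting `F` only in `f`. -/
theorem stmt5 {X : Type*} [TopologicalSpace X]
    (F : Set (X → ℝ)) (hc : ∀ f ∈ F, Continuous f) (hF : MinSepFun F) :
    ∀ f ∈ F, ∃ U : Set (X → ℝ), IsOpen U ∧ f ∈ U ∧ U ∩ F = {f} := by
  intro f hf
  have hss : F \ {f} ⊂ F := Set.sdiff_singleton_ssubset.mpr hf
  have hns := hF.2 _ hss
  rw [SepFun] at hns
  push_neg at hns
  obtain ⟨x, y, hxy, hag⟩ := hns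
  obtain ⟨g, hgF, hgxy⟩ := hF.1 x y hxy
  have hgf : g = f := by
    by_contra h
    exact hgxy (hag g ⟨hgF, h⟩)
  subst hgf
  refine ⟨{h | h x ≠ h y}, ?_, hgxy, ?_⟩
  · exact isOpen_ne_fun (continuous_apply x) (continuous_apply y)
  · ext h
    constructor
    · rintro ⟨hne, hhF⟩
      by_contra hne2
      exact hne (hag h ⟨hhF, hne2⟩)
    · rintro rfl
      exact ⟨hgxy, hf⟩
end

section
/- Let X = {0} ∪ {1/(n+1) : n ∈ ω} ⊆ ℝ with the subspace topology. Define f_n : X → ℝ by f_n(x) = 1/(n+1) if x = 1/(n+1) and f_n(x) = 0 otherwise. Then K = {0} ∪ {f_n : n ∈ ω} (where 0 is the zero function) is a compact point-separating subset of C_p(X) containing no proper compact point-separating subset. -/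
open Set Filter Topology

/-- The convergent sequence `{0} ∪ {1/(n+1) : n ∈ ω}` as a subspace of `ℝ`. -/
def Xseq : Set ℝ := {x : ℝ | x = 0 ∨ ∃ n : ℕ, x = 1 / ((n : ℝ) + 1)}

/-- `fseq n` takes the value `1/(n+1)` at the point `1/(n+1)` and `0` elsewhere. -/
noncomputable def fseq (n : ℕ) : Xseq → ℝ :=
  fun x => if (x : ℝ) = 1 / ((n : ℝ) + 1) then 1 / ((n : ℝ) + 1) else 0

lemma pseq_pos (n : ℕ) : (0:ℝ) < 1 / ((n : ℝ) + 1) := by positivity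

lemma pseq_inj {n m : ℕ} (h : (1:ℝ) / ((n : ℝ) + 1) = 1 / ((m : ℝ) + 1)) : n = m := by
  have h1 : ((n:ℝ) + 1) ≠ 0 := by positivity
  have h2 : ((m:ℝ) + 1) ≠ 0 := by positivity
  field_simp at h
  exact_mod_cast (by linarith : (n:ℝ) = (m:ℝ))

/-- The point `1/(n+1)` of `Xseq`. -/
noncomputable def pX (n : ℕ) : Xseq := ⟨1 / ((n : ℝ) + 1), Or.inr ⟨n, rfl⟩⟩

/-- The point `0` of `Xseq`. -/
noncomputable def zX : Xseq := ⟨0, Or.inl rfl⟩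

lemma fseq_self (n : ℕ) : fseq n (pX n) = 1 / ((n : ℝ) + 1) := by
  simp [fseq, pX]

lemma fseq_ne {n : ℕ} {y : Xseq} (h : (y : ℝ) ≠ 1 / ((n : ℝ) + 1)) : fseq n y = 0 := by
  simp only [fseq]
  rw [if_neg h]

/-- The singleton `{1/(n+1)}` is open in `Xseq`. -/
lemma isOpen_pt (n : ℕ) : IsOpen {x : Xseq | (x : ℝ) = 1 / ((n : ℝ) + 1)} := by
  have key : {x : Xseq | (x : ℝ) = 1 / ((n : ℝ) + 1)} =
      (Subtype.val) ⁻¹' (Ioo (1 / ((n:ℝ) + 2)) (2 / ((n:ℝ) + 1) - 1 / ((n:ℝ) + 2))) := by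
    ext x
    simp only [mem_setOf_eq, mem_preimage, mem_Ioo]
    constructor
    · rintro h
      rw [h]
      constructor
      · apply div_lt_div_of_pos_left one_pos (by positivity)
        linarith
      · have h2 : 1 / ((n:ℝ) + 2) < 1 / ((n:ℝ) + 1) := by
          apply div_lt_div_of_pos_left one_pos (by positivity); linarith
        have : (2:ℝ) / ((n:ℝ) + 1) = 1 / ((n:ℝ)+1) + 1 / ((n:ℝ)+1) := by ring
        rw [this]; linarith
    · rintro ⟨hlo, hhi⟩
      rcases x.2 with hx | ⟨m, hx⟩
      · exfalso; rw [hx] at hlo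
        exact absurd hlo (not_lt.2 (by positivity))
      · rw [hx] at hlo hhi ⊢
        -- from hlo : 1/(n+2) < 1/(m+1) we get m + 1 < n + 2, i.e. m ≤ n
        have hmn : (m:ℝ) + 1 < (n:ℝ) + 2 := lt_of_one_div_lt_one_div (by positivity) hlo
        have hm_le : m ≤ n := by
          have : m + 1 < n + 2 := by exact_mod_cast hmn
          omega
        -- show m = n; suppose m < n
        rcases eq_or_lt_of_le hm_le with h | h
        · rw [h]
        · exfalso
          -- then m + 1 ≤ n, so 1/(m+1) ≥ 1/n ≥ 2/(n+1) - 1/(n+2)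
          have h1 : ((m:ℝ) + 1) ≤ (n:ℝ) := by exact_mod_cast h
          have hn1 : (1:ℝ) ≤ (n:ℝ) := by
            have : (1:ℕ) ≤ n := Nat.one_le_of_lt h
            exact_mod_cast this
          have hnpos : (0:ℝ) < (n:ℝ) := by linarith
          have step1 : (1:ℝ) / (n:ℝ) ≤ 1 / ((m:ℝ) + 1) :=
            one_div_le_one_div_of_le (by positivity) h1
          have step2 : (2:ℝ) / ((n:ℝ) + 1) - 1 / ((n:ℝ) + 2) ≤ 1 / (n:ℝ) := by
            rw [sub_le_iff_le_add, div_add_div _ _ hnpos.ne' (by positivity),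
              div_le_div_iff₀ (by positivity) (by positivity)]
            nlinarith
          linarith
  rw [key]
  exact continuous_subtype_val.isOpen_preimage _ isOpen_Ioo

lemma isClopen_pt (n : ℕ) : IsClopen {x : Xseq | (x : ℝ) = 1 / ((n : ℝ) + 1)} :=
  ⟨isClosed_eq continuous_subtype_val continuous_const, isOpen_pt n⟩

lemma fseq_continuous (n : ℕ) : Continuous (fseq n) := by
  unfold fseq
  apply Continuous.if _ continuous_const continuous_const
  intro a ha
  rw [(isClopen_pt n).frontier_eq] at ha
  exact absurd ha (notMem_empty a)

lemma fseq_tendsto : Tendsto fseq cofinite (𝓝 (0 : Xseq → ℝ)) := by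
  rw [tendsto_pi_nhds]
  intro x
  have hfin : {n : ℕ | ¬ fseq n x = 0}.Finite := by
    apply Set.Finite.subset (Set.Subsingleton.finite (s := {n : ℕ | (x:ℝ) = 1/((n:ℝ)+1)}) ?_)
    · intro n hn
      by_contra hx
      exact hn (fseq_ne fun h => hx (h.symm ▸ rfl))
    · intro a ha b hb
      exact pseq_inj (ha.symm.trans hb)
  have hev : ∀ᶠ n in cofinite, fseq n x = 0 := eventually_cofinite.2 hfin
  exact Tendsto.congr' (hev.mono fun n hn => hn.symm) tendsto_const_nhds

lemma range_onePoint :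
    Set.range (fun o : OnePoint ℕ => o.elim (0 : Xseq → ℝ) fseq) =
      insert (0 : Xseq → ℝ) (Set.range fseq) := by
  ext g
  constructor
  · rintro ⟨o, rfl⟩
    cases o with
    | infty => exact mem_insert _ _
    | coe n => exact mem_insert_of_mem _ (mem_range_self n)
  · rintro (rfl | ⟨n, rfl⟩)
    · exact ⟨(none : OnePoint ℕ), rfl⟩
    · exact ⟨(some n : OnePoint ℕ), rfl⟩

/-- `K = {0} ∪ {fseq n : n ∈ ω}` is a compact point-separating set of continuous
functions in `C_p(Xseq)` (pointwise convergence topology) with no proper compact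
point-separating subset. -/
theorem stmt14 :
    (∀ g ∈ insert (0 : Xseq → ℝ) (Set.range fseq), Continuous g) ∧
    IsCompact (insert (0 : Xseq → ℝ) (Set.range fseq)) ∧
    SepFun (insert (0 : Xseq → ℝ) (Set.range fseq)) ∧
    ∀ K' ⊂ insert (0 : Xseq → ℝ) (Set.range fseq), IsCompact K' → ¬ SepFun K' := by
  refine ⟨?_, ?_, ?_, ?_⟩
  · -- continuity
    rintro g (rfl | ⟨n, rfl⟩)
    · exact continuous_const
    · exact fseq_continuous n
  · -- compactness
    have hF : Continuous (fun o : OnePoint ℕ => o.elim (0 : Xseq → ℝ) fseq) := by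
      rw [OnePoint.continuous_iff_from_discrete]
      exact fseq_tendsto
    rw [← range_onePoint]
    exact isCompact_range hF
  · -- separation
    intro x y hxy
    have hxy' : (x : ℝ) ≠ (y : ℝ) := fun h => hxy (Subtype.ext h)
    rcases x.2 with hx | ⟨n, hx⟩
    · rcases y.2 with hy | ⟨m, hy⟩
      · exact absurd (hx.trans hy.symm) hxy'
      · refine ⟨fseq m, mem_insert_of_mem _ (mem_range_self m), ?_⟩
        have h1 : fseq m x = 0 := fseq_ne (by rw [hx]; exact (pseq_pos m).ne)
        have h2 : fseq m y = 1 / ((m:ℝ) + 1) := by simp [fseq, hy]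
        rw [h1, h2]
        exact (pseq_pos m).ne
    · refine ⟨fseq n, mem_insert_of_mem _ (mem_range_self n), ?_⟩
      have h1 : fseq n x = 1 / ((n:ℝ) + 1) := by simp [fseq, hx]
      have h2 : fseq n y = 0 := fseq_ne (fun h => hxy' (hx.trans h.symm))
      rw [h1, h2]
      exact (pseq_pos n).ne'
  · -- minimality
    intro K' hsub hcomp hsep
    by_cases hall : ∀ n, fseq n ∈ K'
    · -- then 0 ∉ K' (else K' is everything), so K' = range fseq, not closed: contradiction
      have h0 : (0 : Xseq → ℝ) ∉ K' := by
        intro h0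
        apply hsub.2
        rintro g (rfl | ⟨n, rfl⟩)
        · exact h0
        · exact hall n
      have hcl : (0 : Xseq → ℝ) ∈ K' := by
        have : (0 : Xseq → ℝ) ∈ closure K' :=
          mem_closure_of_tendsto fseq_tendsto (Eventually.of_forall fun n => hall n)
        rwa [hcomp.isClosed.closure_eq] at this
      exact h0 hcl
    · push_neg at hall
      obtain ⟨n, hn⟩ := hall
      -- K' cannot separate pX n from zX
      have hne : pX n ≠ zX := by
        intro h
        have : (1:ℝ) / ((n:ℝ) + 1) = 0 := congrArg Subtype.val h
        exact (pseq_pos n).ne' this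
      obtain ⟨f, hf, hfne⟩ := hsep (pX n) zX hne
      rcases hsub.1 hf with rfl | ⟨m, rfl⟩
      · exact hfne rfl
      · have hmn : m ≠ n := fun h => hn (h ▸ hf)
        apply hfne
        have h1 : fseq m (pX n) = 0 :=
          fseq_ne (fun h => hmn (pseq_inj h).symm)
        have h2 : fseq m zX = 0 := fseq_ne (show (0:ℝ) ≠ _ from (pseq_pos m).ne)
        rw [h1, h2]
end
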